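/- In the ranked sum of T = α + 1 with all components equal to β + 1 (β the least ordinal with α + β = β), for each t ≤ α the maximum element a_t of P_t satisfies rank_{RP}(a_t) = β + t. -/

import Mathlib

open Ordinal

section RankedSum

variable {T : Type*} [PartialOrder T] {P : T → Type*} [∀ t, PartialOrder (P t)]
  [∀ t, WellFoundedLT (P t)]

/-- The primitive rank of an element of the disjoint union: its ordinal rank
inside its own component. -/
noncomputable def primRank (a : Σ t, P t) : Ordinal :=
  IsWellFounded.rank (α := P a.1) (· < ·) a.2

/-- The ranked sum (strict) order on the disjoint union of the family `P`. -/
def RankedLT (a b : Σ t, P t) : Prop :=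
  (∃ h : a.1 = b.1, (h ▸ a.2) < b.2) ∨ (a.1 < b.1 ∧ primRank a ≤ primRank b)

/-- The reflexive closure of the ranked sum order. -/
def RankedLE (a b : Σ t, P t) : Prop :=
  RankedLT a b ∨ a = b

variable [WellFoundedLT T]

theorem rankedLT_wf : WellFounded (RankedLT (T := T) (P := P)) := by
  have hsub : Subrelation (RankedLT (T := T) (P := P))
      (InvImage (Prod.Lex (· < ·) (· < ·))
        (fun a => (IsWellFounded.rank (α := T) (· < ·) a.1, primRank a))) := by
    rintro ⟨s, x⟩ ⟨t, y⟩ (⟨h, hlt⟩ | ⟨h, _⟩)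
    · dsimp at h
      subst h
      exact Prod.Lex.right _ (IsWellFounded.rank_lt_of_rel hlt)
    · exact Prod.Lex.left _ _ (IsWellFounded.rank_lt_of_rel h)
  exact Subrelation.wf hsub
    (InvImage.wf _ (WellFounded.prod_lex wellFounded_lt wellFounded_lt))

instance : IsWellFounded (Σ t, P t) RankedLT := ⟨rankedLT_wf⟩

/-- The rank of an element of the ranked sum. -/
noncomputable def rankedRank (a : Σ t, P t) : Ordinal :=
  IsWellFounded.rank (RankedLT (T := T) (P := P)) a

end RankedSum

namespace Ordinal

noncomputable def nadd (a b : Ordinal.{u}) : Ordinal.{u} :=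
  max (⨆ x : Set.Iio a, Order.succ (nadd x.1 b)) (⨆ x : Set.Iio b, Order.succ (nadd a x.1))
termination_by (a, b)
decreasing_by
  · exact Prod.Lex.left _ _ x.2
  · exact Prod.Lex.right _ x.2

infixl:65 " ♯ " => Ordinal.nadd

theorem nadd_le_iff {a b c : Ordinal.{u}} :
    a ♯ b ≤ c ↔ (∀ a' < a, a' ♯ b < c) ∧ ∀ b' < b, a ♯ b' < c := by
  rw [nadd, max_le_iff, Ordinal.iSup_le_iff, Ordinal.iSup_le_iff]
  simp [Order.succ_le_iff]

theorem nadd_lt_nadd_right {b c : Ordinal.{u}} (h : b < c) (a : Ordinal.{u}) : b ♯ a < c ♯ a :=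
  (nadd_le_iff.1 le_rfl).1 b h

theorem nadd_lt_nadd_left {b c : Ordinal.{u}} (h : b < c) (a : Ordinal.{u}) : a ♯ b < a ♯ c :=
  (nadd_le_iff.1 le_rfl).2 b h

theorem nadd_le_nadd_right {b c : Ordinal.{u}} (h : b ≤ c) (a : Ordinal.{u}) : b ♯ a ≤ c ♯ a := by
  rcases h.lt_or_eq with h | rfl
  · exact (nadd_lt_nadd_right h a).le
  · exact le_rfl

theorem nadd_le_nadd_left {b c : Ordinal.{u}} (h : b ≤ c) (a : Ordinal.{u}) : a ♯ b ≤ a ♯ c := by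
  rcases h.lt_or_eq with h | rfl
  · exact (nadd_lt_nadd_left h a).le
  · exact le_rfl

theorem nadd_comm (a b : Ordinal.{u}) : a ♯ b = b ♯ a := by
  induction a using Ordinal.induction generalizing b with
  | _ a IHa =>
  induction b using Ordinal.induction with
  | _ b IHb =>
  apply le_antisymm
  · refine nadd_le_iff.2 ⟨fun a' h => ?_, fun b' h => ?_⟩
    · rw [IHa a' h b]; exact nadd_lt_nadd_left h b
    · rw [IHb b' h]; exact nadd_lt_nadd_right h a
  · refine nadd_le_iff.2 ⟨fun b' h => ?_, fun a' h => ?_⟩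
    · rw [← IHb b' h]; exact nadd_lt_nadd_left h a
    · rw [← IHa a' h b]; exact nadd_lt_nadd_right h b

@[simp]
theorem nadd_zero (a : Ordinal.{u}) : a ♯ 0 = a := by
  induction a using Ordinal.induction with
  | _ a IH =>
  apply le_antisymm
  · refine nadd_le_iff.2 ⟨fun a' h => ?_, fun b' h => absurd h (not_lt_of_ge (zero_le (a := b')))⟩
    rw [IH a' h]; exact h
  · refine le_of_forall_lt fun c hc => ?_
    rw [← IH c hc]; exact nadd_lt_nadd_right hc 0

theorem add_le_nadd (a b : Ordinal.{u}) : a + b ≤ a ♯ b := by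
  induction b using Ordinal.induction with
  | _ b IH =>
  refine le_of_forall_lt fun c hc => ?_
  rcases lt_or_ge c a with hca | hac
  · calc c < a := hca
      _ = a ♯ 0 := (nadd_zero a).symm
      _ ≤ a ♯ b := nadd_le_nadd_left (zero_le (a := b)) a
  · have hs : a + (c - a) = c := Ordinal.add_sub_cancel_of_le hac
    have hlt : c - a < b := by
      rw [← hs] at hc; exact (add_lt_add_iff_left a).1 hc
    calc c = a + (c - a) := hs.symm
      _ ≤ a ♯ (c - a) := IH _ hlt
      _ < a ♯ b := nadd_lt_nadd_left hlt a

end Ordinal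

private theorem nadd_block (d : Ordinal)
    (hd : ∀ u v, u < ω ^ d → v < ω ^ d → u ♯ v < ω ^ d) :
    ∀ c : Ordinal, ∀ (n m : ℕ) (r s : Ordinal), r < ω ^ d → s < ω ^ d →
      (ω ^ d * n + r) ♯ (ω ^ d * m + s) ≤ c →
      (ω ^ d * n + r) ♯ (ω ^ d * m + s) ≤ ω ^ d * (n + m : ℕ) + (r ♯ s) := by
  have hne : ω ^ d ≠ 0 := opow_ne_zero d omega0_ne_zero
  intro c
  induction c using Ordinal.induction with
  | _ c IH =>
  intro n m r s hr hs hc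
  rw [nadd_le_iff]
  have key : ∀ (n m : ℕ) (r s a₀ : Ordinal), r < ω ^ d → s < ω ^ d →
      a₀ < ω ^ d * n + r →
      a₀ ♯ (ω ^ d * m + s) < c →
      a₀ ♯ (ω ^ d * m + s) < ω ^ d * (n + m : ℕ) + (r ♯ s) := by
    intro n m r s a₀ hr hs ha₀ hlt
    have hmod : a₀ % (ω ^ d) < ω ^ d := Ordinal.mod_lt a₀ hne
    have hdm : ω ^ d * (a₀ / ω ^ d) + a₀ % ω ^ d = a₀ := Ordinal.div_add_mod a₀ _
    have hpn : a₀ / ω ^ d < (n : Ordinal) + 1 := by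
      rw [Ordinal.div_lt hne]
      calc a₀ < ω ^ d * n + r := ha₀
        _ < ω ^ d * n + ω ^ d := add_lt_add_right hr _
        _ = ω ^ d * ((n : Ordinal) + 1) := by rw [mul_add_one]
    obtain ⟨p, hp⟩ := Ordinal.lt_omega0.1 (hpn.trans (by
      rw [← Nat.cast_one, ← Nat.cast_add]; exact nat_lt_omega0 _))
    rw [hp] at hpn hdm
    have hple : p ≤ n := by
      rw [← Nat.cast_one, ← Nat.cast_add, Nat.cast_lt] at hpn
      omega
    have hbound := IH _ hlt p m (a₀ % ω ^ d) s hmod hs (by rw [hdm])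
    rw [hdm] at hbound
    rcases lt_or_eq_of_le hple with hplt | rfl
    · refine hbound.trans_lt (lt_of_lt_of_le (lt_of_lt_of_le
        (add_lt_add_right (hd _ s hmod hs) _) ?_) le_self_add)
      rw [← mul_add_one]
      refine mul_le_mul_right ?_ _
      have : ((p + m : ℕ) : Ordinal) + 1 = ((p + m + 1 : ℕ) : Ordinal) := by push_cast; ring
      rw [this, Nat.cast_le]
      omega
    · have hrlt : a₀ % ω ^ d < r := by
        rw [← hdm] at ha₀
        exact (add_lt_add_iff_left _).1 ha₀
      exact hbound.trans_lt (add_lt_add_right (nadd_lt_nadd_right hrlt s) _)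
  constructor
  · intro a₀ ha₀
    exact key n m r s a₀ hr hs ha₀ ((nadd_lt_nadd_right ha₀ _).trans_le hc)
  · intro b₀ hb₀
    rw [nadd_comm]
    have hc' : b₀ ♯ (ω ^ d * n + r) < c := by
      rw [nadd_comm]
      exact (nadd_lt_nadd_left hb₀ _).trans_le hc
    have hres := key m n s r b₀ hs hr hb₀ hc'
    rwa [nadd_comm s r, Nat.add_comm m n] at hres

private theorem nadd_opow_closed : ∀ e : Ordinal, ∀ x y, x < ω ^ e → y < ω ^ e →
    x ♯ y < ω ^ e := by
  intro e
  induction e using Ordinal.induction with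
  | _ e IHe =>
  intro x y hx hy
  rcases Ordinal.zero_or_succ_or_isSuccLimit e with rfl | ⟨d, rfl⟩ | he
  · rw [opow_zero, Ordinal.lt_one_iff_zero] at hx hy
    rw [hx, hy]
    simpa using zero_lt_one
  · have hd : ∀ u v, u < ω ^ d → v < ω ^ d → u ♯ v < ω ^ d :=
      IHe d (Order.lt_succ d)
    have hne : ω ^ d ≠ 0 := opow_ne_zero d omega0_ne_zero
    rw [opow_succ] at hx hy ⊢
    obtain ⟨n', hn', hxn⟩ := (lt_mul_iff_of_isSuccLimit isSuccLimit_omega0).1 hx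
    obtain ⟨m', hm', hym⟩ := (lt_mul_iff_of_isSuccLimit isSuccLimit_omega0).1 hy
    obtain ⟨n, rfl⟩ := Ordinal.lt_omega0.1 hn'
    obtain ⟨m, rfl⟩ := Ordinal.lt_omega0.1 hm'
    have hp' : x / ω ^ d < ω := (Ordinal.div_lt hne).2 (hxn.trans_le
      (mul_le_mul_right (nat_lt_omega0 n).le _))
    have hq' : y / ω ^ d < ω := (Ordinal.div_lt hne).2 (hym.trans_le
      (mul_le_mul_right (nat_lt_omega0 m).le _))
    obtain ⟨p, hp⟩ := Ordinal.lt_omega0.1 hp'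
    obtain ⟨q, hq⟩ := Ordinal.lt_omega0.1 hq'
    have hdx : ω ^ d * p + x % ω ^ d = x := by rw [← hp]; exact Ordinal.div_add_mod x _
    have hdy : ω ^ d * q + y % ω ^ d = y := by rw [← hq]; exact Ordinal.div_add_mod y _
    have hb := nadd_block d hd (x ♯ y) p q (x % ω ^ d) (y % ω ^ d)
      (Ordinal.mod_lt x hne) (Ordinal.mod_lt y hne) (by rw [hdx, hdy])
    rw [hdx, hdy] at hb
    calc x ♯ y ≤ ω ^ d * (p + q : ℕ) + (x % ω ^ d ♯ y % ω ^ d) := hb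
      _ < ω ^ d * (p + q : ℕ) + ω ^ d :=
          add_lt_add_right (hd _ _ (Ordinal.mod_lt x hne) (Ordinal.mod_lt y hne)) _
      _ = ω ^ d * ((p + q : ℕ) + 1) := by rw [mul_add_one]
      _ < ω ^ d * ω := by
          refine (isNormal_mul_right (opow_pos d omega0_pos)).strictMono.lt_iff_lt.2 ?_
          rw [← Nat.cast_one, ← Nat.cast_add]
          exact nat_lt_omega0 _
  · obtain ⟨d₁, hd₁, hx'⟩ := (lt_opow_of_isSuccLimit omega0_ne_zero he).1 hx
    obtain ⟨d₂, hd₂, hy'⟩ := (lt_opow_of_isSuccLimit omega0_ne_zero he).1 hy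
    have hmax : max d₁ d₂ < e := max_lt hd₁ hd₂
    have h1 : x < ω ^ max d₁ d₂ :=
      hx'.trans_le (opow_le_opow_right omega0_pos (le_max_left _ _))
    have h2 : y < ω ^ max d₁ d₂ :=
      hy'.trans_le (opow_le_opow_right omega0_pos (le_max_right _ _))
    exact (IHe _ hmax x y h1 h2).trans ((opow_lt_opow_iff_right one_lt_omega0).2 hmax)

private theorem prin_of_min {α β : Ordinal.{0}}
    (hβ : α + β = β) (hmin : ∀ γ : Ordinal.{0}, α + γ = γ → β ≤ γ) :
    ∀ γ < β, γ + β = β := by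
  rcases eq_or_ne α 0 with rfl | hα
  · have : β ≤ 0 := hmin 0 (by simp)
    intro γ hγ
    exact absurd (hγ.trans_le this) (not_lt_of_ge (zero_le (a := γ)))
  · have habs : ∀ n : ℕ, α * n + β = β := by
      intro n
      induction n with
      | zero => simp
      | succ n IH =>
        rw [Nat.cast_succ, mul_add_one, add_assoc, hβ, IH]
    have hβω : β = α * ω := by
      apply le_antisymm
      · refine hmin (α * ω) ?_
        have h1 : α + α * ω = α * (1 + ω) := by rw [mul_add, mul_one]
        rw [h1, one_add_omega0]
      · rw [mul_le_iff_of_isSuccLimit isSuccLimit_omega0]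
        intro b hb
        obtain ⟨n, rfl⟩ := Ordinal.lt_omega0.1 hb
        calc α * n ≤ α * n + β := le_self_add
          _ = β := habs n
    intro γ hγ
    rw [hβω] at hγ
    obtain ⟨b, hb, hγn⟩ := (lt_mul_iff_of_isSuccLimit isSuccLimit_omega0).1 hγ
    obtain ⟨n, rfl⟩ := Ordinal.lt_omega0.1 hb
    apply le_antisymm
    · calc γ + β ≤ α * n + β := add_le_add_left hγn.le β
        _ = β := habs n
    · exact le_add_self

private theorem nadd_lt_of_prin {β : Ordinal.{0}} (hprin : ∀ γ < β, γ + β = β)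
    {x y : Ordinal} (hx : x < β) (hy : y < β) : x ♯ y < β := by
  have hP : IsPrincipal (· + ·) β := principal_add_iff_add_left_eq_self.2 hprin
  rcases principal_add_iff_zero_or_omega0_opow.1 hP with rfl | ⟨e, rfl⟩
  · exact absurd hx (not_lt_of_ge (zero_le (a := x)))
  · exact nadd_opow_closed e x y hx hy

private theorem nadd_eq_add_of_prin {β : Ordinal.{0}} (hprin : ∀ γ < β, γ + β = β) :
    ∀ t < β, β ♯ t = β + t := by
  intro t
  induction t using Ordinal.induction with
  | _ t IH =>
  intro ht
  refine le_antisymm ?_ (add_le_nadd β t)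
  rw [nadd_le_iff]
  constructor
  · intro b' hb'
    exact (nadd_lt_of_prin hprin hb' ht).trans_le (le_self_add (a := β) (b := t))
  · intro t' ht'
    rw [IH t' ht' (ht'.trans ht)]
    exact add_lt_add_right ht' β

private theorem rank_Iic (β : Ordinal.{0}) : ∀ (x : Ordinal) (hx : x ≤ β),
    IsWellFounded.rank (α := Set.Iic β) (· < ·) ⟨x, hx⟩ = Ordinal.lift.{1} x := by
  intro x
  induction x using Ordinal.induction with
  | _ x IH =>
  intro hx
  apply le_antisymm
  · rw [IsWellFounded.rank_eq]
    apply Ordinal.iSup_le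
    rintro ⟨⟨y, hy⟩, hyx⟩
    have hyx' : y < x := hyx
    rw [Order.succ_le_iff, IH y hyx' hy]
    exact lift_lt.2 hyx'
  · by_contra h
    push_neg at h
    obtain ⟨y, hy, hey⟩ := lt_lift_iff.1 h
    have h2 := IsWellFounded.rank_lt_of_rel (α := Set.Iic β) (r := (· < ·))
      (a := ⟨y, hy.le.trans hx⟩) (b := ⟨x, hx⟩) hy
    rw [IH y hy (hy.le.trans hx)] at h2
    exact h2.ne hey

private theorem primRank_eq {α β : Ordinal.{0}} (t : Set.Iic α) (x : Set.Iic β) :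
    primRank (⟨t, x⟩ : Σ _ : Set.Iic α, Set.Iic β) = Ordinal.lift.{1} x.1 :=
  rank_Iic β x.1 x.2

private theorem lift_le_rankedRank {α β : Ordinal.{0}} (t : Set.Iic α) :
    ∀ (x : Ordinal) (hx : x ≤ β),
      Ordinal.lift.{1} x ≤ rankedRank (⟨t, ⟨x, hx⟩⟩ : Σ _ : Set.Iic α, Set.Iic β) := by
  intro x
  induction x using Ordinal.induction with
  | _ x IH =>
  intro hx
  by_contra h
  push_neg at h
  obtain ⟨y, hy, hey⟩ := lt_lift_iff.1 h
  have hrel : RankedLT (⟨t, ⟨y, hy.le.trans hx⟩⟩ : Σ _ : Set.Iic α, Set.Iic β) ⟨t, ⟨x, hx⟩⟩ :=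
    Or.inl ⟨rfl, Subtype.mk_lt_mk.2 hy⟩
  have h2 := IsWellFounded.rank_lt_of_rel
    (r := RankedLT (T := Set.Iic α) (P := fun _ => Set.Iic β)) hrel
  exact ((IH y hy (hy.le.trans hx)).trans_lt h2).ne hey

private theorem rankedRank_le_nadd {α β : Ordinal.{0}} :
    ∀ a : Σ _ : Set.Iic α, Set.Iic β,
      rankedRank a ≤ Ordinal.lift.{1} (a.2.1 ♯ a.1.1) := by
  intro a
  refine IsWellFounded.induction
    (RankedLT (T := Set.Iic α) (P := fun _ => Set.Iic β))
    (motive := fun a => rankedRank a ≤ Ordinal.lift.{1} (a.2.1 ♯ a.1.1)) a ?_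
  rintro ⟨t, x⟩ IH
  show IsWellFounded.rank _ _ ≤ _
  rw [IsWellFounded.rank_eq]
  apply Ordinal.iSup_le
  rintro ⟨⟨s, z⟩, hc⟩
  rw [Order.succ_le_iff]
  have hle := IH ⟨s, z⟩ hc
  rcases hc with ⟨heq, hlt⟩ | ⟨hst, hpr⟩
  · dsimp at heq
    subst heq
    have hzx : z < x := hlt
    exact hle.trans_lt (lift_lt.2 (nadd_lt_nadd_right (Subtype.coe_lt_coe.2 hzx) _))
  · rw [primRank_eq, primRank_eq] at hpr
    have hz : z.1 ≤ x.1 := lift_le.1 hpr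
    calc IsWellFounded.rank _ (⟨s, z⟩ : Σ _ : Set.Iic α, Set.Iic β) ≤
        Ordinal.lift.{1} (z.1 ♯ s.1) := hle
      _ ≤ Ordinal.lift.{1} (x.1 ♯ s.1) := lift_le.2 (nadd_le_nadd_right hz _)
      _ < Ordinal.lift.{1} (x.1 ♯ t.1) :=
        lift_lt.2 (nadd_lt_nadd_left (Subtype.coe_lt_coe.2 hst) _)

private theorem lift_add_le_rankedRank {α β : Ordinal.{0}} :
    ∀ (t : Ordinal) (ht : t ≤ α),
      Ordinal.lift.{1} (β + t)
        ≤ rankedRank (⟨⟨t, ht⟩, ⟨β, Set.self_mem_Iic⟩⟩ : Σ _ : Set.Iic α, Set.Iic β) := by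
  intro t
  induction t using Ordinal.induction with
  | _ t IH =>
  intro ht
  by_contra h
  push_neg at h
  obtain ⟨u, hu, heu⟩ := lt_lift_iff.1 h
  rcases lt_or_ge u β with hub | hbu
  · exact (((lift_lt.2 hub).trans_le
      (lift_le_rankedRank (⟨t, ht⟩ : Set.Iic α) β le_rfl))).ne heu
  · have hs : β + (u - β) = u := Ordinal.add_sub_cancel_of_le hbu
    have hst : u - β < t := by
      have h3 : β + (u - β) < β + t := by rw [hs]; exact hu
      exact (add_lt_add_iff_left β).1 h3
    have hrel : RankedLT
        (⟨⟨u - β, hst.le.trans ht⟩, ⟨β, Set.self_mem_Iic⟩⟩ : Σ _ : Set.Iic α, Set.Iic β)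
        ⟨⟨t, ht⟩, ⟨β, Set.self_mem_Iic⟩⟩ := Or.inr ⟨Subtype.mk_lt_mk.2 hst, le_rfl⟩
    have h2 := IsWellFounded.rank_lt_of_rel
      (r := RankedLT (T := Set.Iic α) (P := fun _ => Set.Iic β)) hrel
    have h3 := IH (u - β) hst (hst.le.trans ht)
    rw [hs] at h3
    exact ((h3.trans_lt h2)).ne heu

theorem rankedRank_of_maxima (α β : Ordinal.{0})
    (hβ : α + β = β) (hmin : ∀ γ : Ordinal.{0}, α + γ = γ → β ≤ γ) :
    ∀ t : Set.Iic α,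
      rankedRank (⟨t, ⟨β, Set.self_mem_Iic⟩⟩ : Σ _ : Set.Iic α, Set.Iic β)
        = Ordinal.lift.{1, 0} (β + t.1) := by
  intro t
  obtain ⟨tv, htv⟩ := t
  apply le_antisymm
  · have hU := rankedRank_le_nadd (α := α) (β := β) ⟨⟨tv, htv⟩, ⟨β, Set.self_mem_Iic⟩⟩
    have heq : β ♯ tv = β + tv := by
      rcases eq_or_ne tv 0 with rfl | h0
      · rw [nadd_zero, add_zero]
      · have hα : α ≠ 0 := by
          rintro rfl
          exact h0 (le_antisymm htv (zero_le (a := tv)))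
        have hαβ : α < β := by
          have h1 : α ≤ β := hβ ▸ le_self_add (a := α) (b := β)
          rcases h1.lt_or_eq with h | h
          · exact h
          · exfalso
            apply hα
            have h2 : α + α = α + 0 := by
              rw [add_zero]
              calc α + α = α + β := by rw [h]
                _ = β := hβ
                _ = α := h.symm
            exact (add_right_inj α).1 h2
        exact nadd_eq_add_of_prin (prin_of_min hβ hmin) tv (htv.trans_lt hαβ)
    rw [← heq]
    exact hU
  · exact lift_add_le_rankedRank tv htv
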